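/- Let x : [0,∞) → ℝ be continuously differentiable and satisfy ẋ(t) = a x(t) + b x(qt) for all t ≥ 0, where a < 0, 0 < q < 1, and b² < a² q. Define V(t) = x(t)² + μ ∫_{qt}^{t} x(s)² ds with μ = -a. Then V is nonincreasing; moreover V̇(t) = (2a+μ) x(t)² + 2b x(t)x(qt) − μ q x(qt)² ≤ 0 for all t ≥ 0. -/

import Mathlib

theorem stmt_6 (a b q : ℝ) (ha : a < 0) (hq0 : 0 < q) (hq1 : q < 1)
    (hb : b ^ 2 < a ^ 2 * q)
    (x : ℝ → ℝ) (hxc : Continuous x)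
    (hx : ∀ t : ℝ, 0 ≤ t → HasDerivAt x (a * x t + b * x (q * t)) t)
    (μ : ℝ) (hμ : μ = -a)
    (V : ℝ → ℝ)
    (hV : ∀ t, V t = x t ^ 2 + μ * ∫ s in (q * t)..t, x s ^ 2) :
    AntitoneOn V (Set.Ici 0) ∧
    (∀ t : ℝ, 0 ≤ t →
      HasDerivAt V ((2 * a + μ) * x t ^ 2 + 2 * b * x t * x (q * t) - μ * q * x (q * t) ^ 2) t ∧
      (2 * a + μ) * x t ^ 2 + 2 * b * x t * x (q * t) - μ * q * x (q * t) ^ 2 ≤ 0) := by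
  have hVeq : V = fun t => x t ^ 2 + μ * ∫ s in (q * t)..t, x s ^ 2 := funext hV
  subst hVeq
  set f : ℝ → ℝ := fun s => x s ^ 2 with hfdef
  have hf : Continuous f := hxc.pow 2
  -- derivative of G u = ∫ 0..u f
  have hG : ∀ t : ℝ, HasDerivAt (fun u => ∫ s in (0:ℝ)..u, f s) (f t) t := fun t =>
    intervalIntegral.integral_hasDerivAt_right (hf.intervalIntegrable _ _)
      (hf.stronglyMeasurableAtFilter _ _) hf.continuousAt
  have hF : ∀ t : ℝ, HasDerivAt (fun u => ∫ s in (q * u)..u, f s) (f t - f (q * t) * q) t := by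
    intro t
    have h2 : HasDerivAt (fun u : ℝ => ∫ s in (0:ℝ)..(q * u), f s) (f (q * t) * (q * 1)) t :=
      (hG (q * t)).comp t ((hasDerivAt_id t).const_mul q)
    have h3 := (hG t).sub h2
    have h4 : (fun u : ℝ => (∫ s in (0:ℝ)..u, f s) - ∫ s in (0:ℝ)..(q * u), f s)
        = fun u : ℝ => ∫ s in (q * u)..u, f s := by
      funext u
      rw [intervalIntegral.integral_interval_sub_left (hf.intervalIntegrable _ _)
        (hf.intervalIntegrable _ _)]
    change HasDerivAt (fun u : ℝ => (∫ s in (0:ℝ)..u, f s) - ∫ s in (0:ℝ)..(q * u), f s) _ t at h3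
    rw [h4] at h3
    simpa using h3
  have hderiv : ∀ t : ℝ, 0 ≤ t →
      HasDerivAt (fun t => x t ^ 2 + μ * ∫ s in (q * t)..t, x s ^ 2)
        ((2 * a + μ) * x t ^ 2 + 2 * b * x t * x (q * t) - μ * q * x (q * t) ^ 2) t := by
    intro t ht
    have h1 : HasDerivAt (fun u => x u ^ 2)
        ((2 : ℕ) * x t ^ 1 * (a * x t + b * x (q * t))) t := (hx t ht).pow 2
    have h2 := h1.add ((hF t).const_mul μ)
    change HasDerivAt (fun u : ℝ => x u ^ 2 + μ * ∫ s in (q * u)..u, f s) _ t at h2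
    convert h2 using 1
    simp only [hfdef]
    ring
  have hle : ∀ t : ℝ,
      (2 * a + μ) * x t ^ 2 + 2 * b * x t * x (q * t) - μ * q * x (q * t) ^ 2 ≤ 0 := by
    intro t
    subst hμ
    nlinarith [sq_nonneg (a * x t + b * x (q * t)), sq_nonneg (x (q * t)),
      mul_nonneg (sq_nonneg (x (q * t))) (le_of_lt (sub_pos.mpr hb))]
  refine ⟨?_, fun t ht => ⟨hderiv t ht, hle t⟩⟩
  have hcont : Continuous fun t => x t ^ 2 + μ * ∫ s in (q * t)..t, x s ^ 2 := by
    refine hf.add (continuous_const.mul ?_)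
    exact continuous_iff_continuousAt.2 fun t => (hF t).continuousAt
  refine antitoneOn_of_deriv_nonpos (convex_Ici 0) hcont.continuousOn
    (fun t ht => ((hderiv t (le_of_lt (by simpa using ht))).differentiableAt).differentiableWithinAt)
    fun t ht => ?_
  rw [(hderiv t (le_of_lt (by simpa using ht))).deriv]
  exact hle t
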